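/- Let H be a real Hilbert space and let K_l ⊆ K_{l−1} ⊆ ⋯ ⊆ K₀ be a chain of closed subspaces of H, with q_i the orthogonal projection of H onto K_i. Let τ₀, …, τ_l be nonnegative real numbers and set t_i := τ₀ + ⋯ + τ_i for 0 ≤ i ≤ l (with the convention t_{−1} = 0). For every real t > 0, the bounded operator Φ_t := t·id_H + Σ_{i=0}^{l} τ_i q_i is bijective, and its inverse is given by Φ_t^{−1} = (1/t)·id_H − Σ_{i=0}^{l} ( τ_i / ((t + t_i)(t + t_i − τ_i)) ) q_i. -/

import Mathlib

lemma key_prod {A : Type*} [Ring A] [Algebra ℝ A] {n : ℕ} (e : Fin n → A)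
    (he : ∀ i j, e i * e j = e (max i j)) (a b : Fin n → ℝ) :
    (∑ i, a i • e i) * (∑ j, b j • e j) =
    ∑ k, ((∑ i ∈ Finset.Iic k, a i) * (∑ j ∈ Finset.Iic k, b j)
      - (∑ i ∈ Finset.Iio k, a i) * (∑ j ∈ Finset.Iio k, b j)) • e k := by
  have hsub : ∀ k : Fin n, (Finset.Iio k ×ˢ Finset.Iio k) ⊆ (Finset.Iic k ×ˢ Finset.Iic k) :=
    fun k => Finset.product_subset_product (Finset.Iio_subset_Iic_self) (Finset.Iio_subset_Iic_self)
  have hfil : ∀ k : Fin n,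
      Finset.filter (fun p : Fin n × Fin n => max p.1 p.2 = k) (Finset.univ ×ˢ Finset.univ)
      = (Finset.Iic k ×ˢ Finset.Iic k) \ (Finset.Iio k ×ˢ Finset.Iio k) := by
    intro k
    ext ⟨i, j⟩
    simp only [Finset.mem_filter, Finset.mem_product, Finset.mem_univ, true_and,
      Finset.mem_sdiff, Finset.mem_Iic, Finset.mem_Iio]
    constructor
    · rintro rfl
      refine ⟨⟨le_max_left _ _, le_max_right _ _⟩, ?_⟩
      rintro ⟨h1, h2⟩
      exact absurd (max_lt h1 h2) (lt_irrefl _)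
    · rintro ⟨⟨h1, h2⟩, h3⟩
      rcases h1.lt_or_eq with h1' | rfl
      · rcases h2.lt_or_eq with h2' | rfl
        · exact absurd ⟨h1', h2'⟩ h3
        · exact max_eq_right h1
      · exact max_eq_left h2
  calc (∑ i, a i • e i) * (∑ j, b j • e j)
      = ∑ i, ∑ j, (a i * b j) • e (max i j) := by
        rw [Finset.sum_mul_sum]
        exact Finset.sum_congr rfl fun i _ => Finset.sum_congr rfl fun j _ => by
          rw [smul_mul_smul_comm, he]
    _ = ∑ p ∈ Finset.univ ×ˢ Finset.univ, (a p.1 * b p.2) • e (max p.1 p.2) := by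
        rw [Finset.sum_product]
    _ = ∑ k, ∑ p ∈ Finset.filter (fun p : Fin n × Fin n => max p.1 p.2 = k)
          (Finset.univ ×ˢ Finset.univ), (a p.1 * b p.2) • e (max p.1 p.2) :=
        (Finset.sum_fiberwise _ _ _).symm
    _ = ∑ k, ((∑ i ∈ Finset.Iic k, a i) * (∑ j ∈ Finset.Iic k, b j)
      - (∑ i ∈ Finset.Iio k, a i) * (∑ j ∈ Finset.Iio k, b j)) • e k := by
        refine Finset.sum_congr rfl fun k _ => ?_
        rw [hfil k]
        rw [sub_smul]
        rw [Finset.sum_mul_sum, Finset.sum_mul_sum]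
        rw [← Finset.sum_product', ← Finset.sum_product']
        rw [Finset.sum_smul, Finset.sum_smul, ← Finset.sum_sdiff_eq_sub (hsub k)]
        refine Finset.sum_congr rfl fun p hp => ?_
        have : max p.1 p.2 = k := by
          have := (hfil k).symm ▸ hp
          simpa using (Finset.mem_filter.mp this).2
        rw [this]

set_option maxHeartbeats 1000000 in
set_option synthInstance.maxHeartbeats 1000000 in
open ContinuousLinearMap in
/-- For a nested chain of closed subspaces `K l ≤ ⋯ ≤ K 0` of a real Hilbert space,
nonnegative scalars `τ i` with partial sums `t i`, and `t > 0`, the operator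
`Φ = t • id + ∑ τ i • q i` is bijective with the explicit inverse
`(1/t) • id - ∑ (τ i / ((t + t i)(t + t i - τ i))) • q i`. -/
theorem stmt6 {H : Type*} [NormedAddCommGroup H] [InnerProductSpace ℝ H]
    [CompleteSpace H] (l : ℕ) (K : Fin (l + 1) → Submodule ℝ H)
    [∀ i, CompleteSpace (K i)]
    (hanti : ∀ i j : Fin (l + 1), i ≤ j → K j ≤ K i)
    (τ : Fin (l + 1) → ℝ) (hτ : ∀ i, 0 ≤ τ i) (t : ℝ) (ht : 0 < t)
    (q : Fin (l + 1) → (H →L[ℝ] H))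
    (hq : ∀ i, q i = (K i).subtypeL ∘L (Submodule.orthogonalProjectionOnto (K i) : H →L[ℝ] K i))
    (tt : Fin (l + 1) → ℝ) (htt : ∀ i, tt i = ∑ j ∈ Finset.Iic i, τ j)
    (Φ Ψ : H →L[ℝ] H)
    (hΦ : Φ = t • (ContinuousLinearMap.id ℝ H) + ∑ i, τ i • q i)
    (hΨ : Ψ = (1 / t) • (ContinuousLinearMap.id ℝ H)
        - ∑ i, (τ i / ((t + tt i) * (t + tt i - τ i))) • q i) :
    Function.Bijective Φ ∧
    Φ ∘L Ψ = ContinuousLinearMap.id ℝ H ∧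
    Ψ ∘L Φ = ContinuousLinearMap.id ℝ H := by
  -- the projections multiply as q i * q j = q (max i j)
  have hq2 : ∀ i j, q i * q j = q (max i j) := by
    intro i j
    rcases le_total i j with h | h
    · rw [max_eq_right h]
      ext x
      rw [ContinuousLinearMap.mul_apply, hq i, hq j]
      simp only [ContinuousLinearMap.comp_apply, Submodule.subtypeL_apply,
        ContinuousLinearMap.coe_coe]
      exact (K i).starProjection_eq_self_iff.mpr
        (hanti i j h (Submodule.orthogonalProjectionOnto (K j) x).2)
    · rw [max_eq_left h]
      ext x
      rw [ContinuousLinearMap.mul_apply, hq i, hq j]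
      simp only [ContinuousLinearMap.comp_apply, Submodule.subtypeL_apply,
        ContinuousLinearMap.coe_coe]
      exact congrArg Subtype.val
        (Submodule.orthogonalProjectionOnto_starProjection_of_le (hanti j i h) x)
  set c : Fin (l + 1) → ℝ := fun i => τ i / ((t + tt i) * (t + tt i - τ i)) with hc
  -- partial sums
  have hself : ∀ k : Fin (l + 1), k ∉ Finset.Iio k := by
    intro k
    simp
  have hIicIio : ∀ k : Fin (l + 1), Finset.Iic k = insert k (Finset.Iio k) :=
    fun k => (Finset.Iio_insert k).symm
  have hIio : ∀ i, tt i - τ i = ∑ j ∈ Finset.Iio i, τ j := by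
    intro i
    rw [htt, hIicIio, Finset.sum_insert (hself i)]
    ring
  have httnn : ∀ i, 0 ≤ tt i := by
    intro i
    rw [htt]
    exact Finset.sum_nonneg fun j _ => hτ j
  have hpos1 : ∀ i, 0 < t + tt i - τ i := by
    intro i
    have : (0:ℝ) ≤ tt i - τ i := by
      rw [hIio]
      exact Finset.sum_nonneg fun j _ => hτ j
    linarith
  have hpos2 : ∀ i, 0 < t + tt i := fun i => by linarith [httnn i]
  -- telescoping sum of the c's
  have htel : ∀ k, ∑ j ∈ Finset.Iic k, c j = 1 / t - 1 / (t + tt k) := by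
    intro k
    induction k using Fin.induction with
    | zero =>
      have h0 : Finset.Iic (0 : Fin (l + 1)) = {0} := by
        ext j
        simp [Fin.le_zero_iff]
      have htt0 : tt 0 = τ 0 := by rw [htt, h0, Finset.sum_singleton]
      rw [h0, Finset.sum_singleton]
      have hce : c 0 = τ 0 / ((t + τ 0) * t) := by
        simp only [hc]
        rw [htt0, show t + τ 0 - τ 0 = t by ring]
      have h2 : t + τ 0 ≠ 0 := by rw [← htt0]; exact (hpos2 0).ne'
      rw [hce, htt0]
      field_simp
      ring
    | succ i ih =>
      have hins : Finset.Iic (i.succ : Fin (l + 1)) = insert i.succ (Finset.Iic i.castSucc) := by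
        ext j
        simp only [Finset.mem_Iic, Finset.mem_insert, Fin.le_def, Fin.val_succ,
          Fin.coe_castSucc, Fin.ext_iff]
        omega
      have hnot : (i.succ : Fin (l + 1)) ∉ Finset.Iic i.castSucc := by
        simp only [Finset.mem_Iic, Fin.le_def, Fin.val_succ, Fin.coe_castSucc]
        omega
      have hIioeq : Finset.Iio (i.succ : Fin (l + 1)) = Finset.Iic i.castSucc := by
        ext j
        simp only [Finset.mem_Iio, Finset.mem_Iic, Fin.lt_def, Fin.le_def, Fin.val_succ,
          Fin.coe_castSucc]
        omega
      have hstep : tt i.succ - τ i.succ = tt i.castSucc := by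
        rw [hIio, hIioeq, ← htt]
      rw [hins, Finset.sum_insert hnot, ih]
      have h2 := hpos2 i.succ
      have h1 := hpos1 i.succ
      have h2' := hpos2 i.castSucc
      have hcs : c i.succ = τ i.succ / ((t + tt i.succ) * (t + tt i.castSucc)) := by
        simp only [hc]
        rw [show t + tt i.succ - τ i.succ = t + tt i.castSucc by linarith [hstep]]
      have hτs : τ i.succ = tt i.succ - tt i.castSucc := by linarith [hstep]
      rw [hcs, hτs]
      field_simp
      ring
  have hcio : ∀ k, ∑ j ∈ Finset.Iio k, c j = (1 / t - 1 / (t + tt k)) - c k := by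
    intro k
    have := htel k
    rw [hIicIio, Finset.sum_insert (hself k)] at this
    linarith
  -- the combined coefficient
  set Z : Fin (l + 1) → ℝ := fun k =>
    tt k * (1 / t - 1 / (t + tt k)) - (tt k - τ k) * ((1 / t - 1 / (t + tt k)) - c k) with hZ
  have hco : ∀ k, (1 / t) * τ k - Z k = t * c k := by
    intro k
    have h2 := hpos2 k
    have h1 := hpos1 k
    have ht' := ht.ne'
    simp only [hZ, hc]
    field_simp
    ring
  -- rewrite as ring elements
  set Sa : H →L[ℝ] H := ∑ i, τ i • q i with hSa
  set Sb : H →L[ℝ] H := ∑ i, c i • q i with hSb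
  have hΦ' : Φ = t • (1 : H →L[ℝ] H) + Sa := by rw [hΦ, ContinuousLinearMap.one_def]
  have hΨ' : Ψ = (1 / t) • (1 : H →L[ℝ] H) - Sb := by rw [hΨ, ContinuousLinearMap.one_def]
  have e1 : (t • (1 : H →L[ℝ] H)) * ((1 / t) • (1 : H →L[ℝ] H)) = 1 := by
    rw [smul_mul_smul_comm, mul_one_div_cancel ht.ne', one_smul, one_mul]
  have e2 : (t • (1 : H →L[ℝ] H)) * Sb = ∑ j, (t * c j) • q j := by
    rw [hSb, Finset.mul_sum]
    exact Finset.sum_congr rfl fun j _ => by rw [smul_mul_smul_comm, one_mul]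
  have e3 : Sa * ((1 / t) • (1 : H →L[ℝ] H)) = ∑ i, ((1 / t) * τ i) • q i := by
    rw [hSa, Finset.sum_mul]
    exact Finset.sum_congr rfl fun i _ => by
      rw [smul_mul_smul_comm, mul_one, mul_comm]
  have e2' : Sb * (t • (1 : H →L[ℝ] H)) = ∑ j, (t * c j) • q j := by
    rw [hSb, Finset.sum_mul]
    exact Finset.sum_congr rfl fun j _ => by
      rw [smul_mul_smul_comm, mul_one, mul_comm]
  have e3' : ((1 / t) • (1 : H →L[ℝ] H)) * Sa = ∑ i, ((1 / t) * τ i) • q i := by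
    rw [hSa, Finset.mul_sum]
    exact Finset.sum_congr rfl fun i _ => by rw [smul_mul_smul_comm, one_mul]
  have e1' : ((1 / t) • (1 : H →L[ℝ] H)) * (t • (1 : H →L[ℝ] H)) = 1 := by
    rw [smul_mul_smul_comm, one_div_mul_cancel ht.ne', one_smul, one_mul]
  have e4 : Sa * Sb = ∑ k, Z k • q k := by
    rw [hSa, hSb, key_prod q hq2 τ c]
    refine Finset.sum_congr rfl fun k _ => ?_
    congr 1
    rw [← htt, ← hIio, htel, hcio]
  have e4' : Sb * Sa = ∑ k, Z k • q k := by
    rw [hSb, hSa, key_prod q hq2 c τ]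
    refine Finset.sum_congr rfl fun k _ => ?_
    congr 1
    rw [← htt, ← hIio, htel, hcio]
    simp only [hZ]
    ring
  have hmain : Φ * Ψ = 1 := by
    rw [hΦ', hΨ', add_mul, mul_sub, mul_sub, e1, e2, e3, e4]
    rw [← Finset.sum_sub_distrib]
    have hz : ∑ i, (((1 / t) * τ i) • q i - Z i • q i) = ∑ j, (t * c j) • q j := by
      refine Finset.sum_congr rfl fun k _ => ?_
      rw [← sub_smul, hco k]
    rw [hz]
    abel
  have hmain' : Ψ * Φ = 1 := by
    rw [hΦ', hΨ', sub_mul, mul_add, mul_add, e1', e3', e2', e4']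
    have hz : (∑ i, ((1 / t) * τ i) • q i) - ∑ i, Z i • q i = ∑ j, (t * c j) • q j := by
      rw [← Finset.sum_sub_distrib]
      exact Finset.sum_congr rfl fun k _ => by rw [← sub_smul, hco k]
    rw [← hz]
    abel
  have hcmp : Φ ∘L Ψ = ContinuousLinearMap.id ℝ H := by
    rw [← ContinuousLinearMap.mul_def, hmain, ContinuousLinearMap.one_def]
  have hcmp' : Ψ ∘L Φ = ContinuousLinearMap.id ℝ H := by
    rw [← ContinuousLinearMap.mul_def, hmain', ContinuousLinearMap.one_def]
  have hli : Function.LeftInverse Ψ Φ := fun x => by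
    have := ContinuousLinearMap.ext_iff.mp hcmp' x
    simpa using this
  have hri : Function.RightInverse Ψ Φ := fun x => by
    have := ContinuousLinearMap.ext_iff.mp hcmp x
    simpa using this
  exact ⟨⟨hli.injective, hri.surjective⟩, hcmp, hcmp'⟩
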